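/- Let ψ : [0, t*) → ℝ be a positive, twice-differentiable function satisfying ψ''(t)ψ(t) - (1+θ)(ψ'(t))² ≥ 0 for some θ > 0, with ψ(0) > 0 and ψ'(0) > 0. Then ψ(t) → ∞ as t → t₋ for some t₋ ≤ ψ(0)/(θ ψ'(0)). -/

import Mathlib

open Set Filter

/-- Levine concavity lemma: if a positive twice-differentiable function `ψ` satisfies
`ψ'' ψ - (1+θ) (ψ')² ≥ 0` on `[0, ψ 0 / (θ ψ' 0))` with `ψ 0 > 0`, `ψ' 0 > 0`,
then `ψ t → ∞` as `t → tb⁻` for some `tb ≤ ψ 0 / (θ ψ' 0)`. -/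
theorem levine_concavity_blowup (ψ ψ' ψ'' : ℝ → ℝ) (θ : ℝ) (hθ : 0 < θ)
    (hd1 : ∀ t ∈ Set.Ico (0 : ℝ) (ψ 0 / (θ * ψ' 0)), HasDerivAt ψ (ψ' t) t)
    (hd2 : ∀ t ∈ Set.Ico (0 : ℝ) (ψ 0 / (θ * ψ' 0)), HasDerivAt ψ' (ψ'' t) t)
    (hpos : ∀ t ∈ Set.Ico (0 : ℝ) (ψ 0 / (θ * ψ' 0)), 0 < ψ t)
    (hineq : ∀ t ∈ Set.Ico (0 : ℝ) (ψ 0 / (θ * ψ' 0)),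
      0 ≤ ψ'' t * ψ t - (1 + θ) * (ψ' t) ^ 2)
    (h0 : 0 < ψ 0) (h0' : 0 < ψ' 0) :
    ∃ tb : ℝ, tb ≤ ψ 0 / (θ * ψ' 0) ∧
      Tendsto ψ (nhdsWithin tb (Set.Iio tb)) atTop := by
  set T : ℝ := ψ 0 / (θ * ψ' 0) with hTdef
  have hT : 0 < T := div_pos h0 (mul_pos hθ h0')
  have h0mem : (0 : ℝ) ∈ Set.Ico (0 : ℝ) T := ⟨le_refl 0, hT⟩
  set h : ℝ → ℝ := fun t => ψ t ^ (-θ) with hhdef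
  set h1 : ℝ → ℝ := fun t => -θ * (ψ' t * ψ t ^ (-θ - 1)) with hh1def
  -- derivative of h
  have hdh : ∀ t ∈ Set.Ico (0 : ℝ) T, HasDerivAt h (h1 t) t := by
    intro t ht
    have := (Real.hasDerivAt_rpow_const (x := ψ t) (p := -θ)
      (Or.inl (hpos t ht).ne')).comp t (hd1 t ht)
    convert this using 1
    · rfl
    · rfl
    · rfl
    change -θ * (ψ' t * ψ t ^ (-θ - 1)) = _; ring
  -- derivative of h1
  have hdh1 : ∀ t ∈ Set.Ico (0 : ℝ) T,
      HasDerivAt h1 (-θ * (ψ'' t * ψ t ^ (-θ - 1) +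
        ψ' t * ((-θ - 1) * ψ t ^ (-θ - 1 - 1) * ψ' t))) t := by
    intro t ht
    have hr : HasDerivAt (fun s => ψ s ^ (-θ - 1))
        ((-θ - 1) * ψ t ^ (-θ - 1 - 1) * ψ' t) t :=
      (Real.hasDerivAt_rpow_const (x := ψ t) (p := -θ - 1)
        (Or.inl (hpos t ht).ne')).comp t (hd1 t ht)
    exact ((hd2 t ht).mul hr).const_mul (-θ)
  -- the derivative of h1 is nonpositive
  have hd1nonpos : ∀ t ∈ Set.Ico (0 : ℝ) T,
      -θ * (ψ'' t * ψ t ^ (-θ - 1) + ψ' t * ((-θ - 1) * ψ t ^ (-θ - 1 - 1) * ψ' t)) ≤ 0 := by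
    intro t ht
    have hp := hpos t ht
    have key : ψ t ^ (-θ - 1) = ψ t * ψ t ^ (-θ - 1 - 1) := by
      rw [show (-θ - 1) = 1 + (-θ - 1 - 1) by ring, Real.rpow_add hp, Real.rpow_one]; congr 2; ring
    have h2 : ψ'' t * ψ t ^ (-θ - 1) + ψ' t * ((-θ - 1) * ψ t ^ (-θ - 1 - 1) * ψ' t)
        = ψ t ^ (-θ - 1 - 1) * (ψ'' t * ψ t - (1 + θ) * (ψ' t) ^ 2) := by
      rw [key]; ring
    rw [h2]
    have : 0 ≤ ψ t ^ (-θ - 1 - 1) * (ψ'' t * ψ t - (1 + θ) * (ψ' t) ^ 2) :=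
      mul_nonneg (Real.rpow_nonneg hp.le _) (hineq t ht)
    nlinarith
  -- h1 is antitone on Ico 0 T
  have hcont1 : ContinuousOn h1 (Set.Ico 0 T) := fun t ht =>
    (hdh1 t ht).continuousAt.continuousWithinAt
  have hanti : AntitoneOn h1 (Set.Ico 0 T) := by
    apply antitoneOn_of_deriv_nonpos (convex_Ico 0 T) hcont1
    · intro t ht
      rw [interior_Ico] at ht
      exact ((hdh1 t ⟨ht.1.le, ht.2⟩).differentiableAt).differentiableWithinAt
    · intro t ht
      rw [interior_Ico] at ht
      have ht' : t ∈ Set.Ico (0 : ℝ) T := ⟨ht.1.le, ht.2⟩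
      rw [(hdh1 t ht').deriv]
      exact hd1nonpos t ht'
  -- concavity bound : h t ≤ h 0 + h1 0 * t
  have hbound : ∀ t ∈ Set.Ico (0 : ℝ) T, h t ≤ h 0 + h1 0 * t := by
    intro t ht
    set F : ℝ → ℝ := fun s => h 0 + h1 0 * s - h s with hFdef
    have hFd : ∀ s ∈ Set.Ico (0 : ℝ) T, HasDerivAt F (h1 0 - h1 s) s := by
      intro s hs
      exact ((hasDerivAt_const s (h 0)).add
        ((hasDerivAt_id s).const_mul (h1 0))).sub (hdh s hs) |>.congr_deriv (by ring)
    have hFmono : MonotoneOn F (Set.Ico 0 T) := by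
      apply monotoneOn_of_deriv_nonneg (convex_Ico 0 T)
        (fun s hs => (hFd s hs).continuousAt.continuousWithinAt)
      · intro s hs
        rw [interior_Ico] at hs
        exact ((hFd s ⟨hs.1.le, hs.2⟩).differentiableAt).differentiableWithinAt
      · intro s hs
        rw [interior_Ico] at hs
        have hs' : s ∈ Set.Ico (0 : ℝ) T := ⟨hs.1.le, hs.2⟩
        rw [(hFd s hs').deriv]
        have := hanti h0mem hs' hs.1.le
        linarith
    have := hFmono h0mem ht ht.1
    simp only [hFdef] at this
    simp only [mul_zero] at this
    linarith
  -- rewrite the bound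
  have hbound' : ∀ t ∈ Set.Ico (0 : ℝ) T, ψ t ^ (-θ) ≤ ψ 0 ^ (-θ) * (1 - t / T) := by
    intro t ht
    have := hbound t ht
    have e1 : ψ 0 ^ (-θ - 1) = ψ 0 ^ (-θ) * (ψ 0)⁻¹ := by
      rw [← Real.rpow_neg_one (ψ 0), ← Real.rpow_add h0]
      ring_nf
    have e2 : h 0 + h1 0 * t = ψ 0 ^ (-θ) * (1 - t / T) := by
      simp only [hhdef, hh1def, e1, hTdef]
      field_simp
      ring
    rw [← e2]
    exact this
  -- lower bound for ψ
  have hlow : ∀ t ∈ Set.Ioo (0 : ℝ) T, ψ 0 * (1 - t / T) ^ (-(1/θ)) ≤ ψ t := by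
    intro t ht
    have ht' : t ∈ Set.Ico (0 : ℝ) T := ⟨ht.1.le, ht.2⟩
    have hp := hpos t ht'
    have hc : 0 < 1 - t / T := by
      have : t / T < 1 := (div_lt_one hT).2 ht.2
      linarith
    have hb := hbound' t ht'
    have hpow : 0 < ψ t ^ (-θ) := Real.rpow_pos_of_pos hp _
    have := Real.rpow_le_rpow_of_nonpos hpow hb (neg_nonpos.2 (one_div_pos.2 hθ).le)
    have e3 : (ψ 0 ^ (-θ)) ^ (-(1/θ)) = ψ 0 := by
      rw [← Real.rpow_mul h0.le, show (-θ) * (-(1/θ)) = 1 by field_simp, Real.rpow_one]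
    calc ψ 0 * (1 - t / T) ^ (-(1/θ))
        = (ψ 0 ^ (-θ) * (1 - t / T)) ^ (-(1/θ)) := by
          rw [Real.mul_rpow (Real.rpow_nonneg h0.le _) hc.le, e3]
      _ ≤ (ψ t ^ (-θ)) ^ (-(1/θ)) := this
      _ = ψ t := by
          rw [← Real.rpow_mul hp.le]
          rw [show (-θ) * (-(1/θ)) = 1 by field_simp]
          exact Real.rpow_one _
  -- the auxiliary function tends to infinity
  have hg : Tendsto (fun t => ψ 0 * (1 - t / T) ^ (-(1/θ))) (nhdsWithin T (Set.Iio T)) atTop := by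
    have t1 : Tendsto (fun t : ℝ => 1 - t / T) (nhdsWithin T (Set.Iio T)) (nhdsWithin 0 (Set.Ioi 0)) := by
      apply tendsto_nhdsWithin_of_tendsto_nhds_of_eventually_within
      · have : Tendsto (fun t : ℝ => 1 - t / T) (nhds T) (nhds (1 - T / T)) := by
          exact (tendsto_const_nhds.sub (tendsto_id.div_const T))
        rw [div_self hT.ne'] at this
        simpa using this.mono_left nhdsWithin_le_nhds
      · filter_upwards [self_mem_nhdsWithin] with t ht
        have : t / T < 1 := (div_lt_one hT).2 ht
        simp only [Set.mem_Ioi]; linarith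
    have t2 : Tendsto (fun x : ℝ => x ^ (-(1/θ))) (nhdsWithin 0 (Set.Ioi 0)) atTop := by
      have base : Tendsto (fun x : ℝ => x ^ (1/θ)) (nhdsWithin 0 (Set.Ioi 0))
          (nhdsWithin 0 (Set.Ioi 0)) := by
        apply tendsto_nhdsWithin_of_tendsto_nhds_of_eventually_within
        · have hc : ContinuousAt (fun x : ℝ => x ^ (1/θ)) 0 :=
            Real.continuousAt_rpow_const 0 (1/θ) (Or.inr (one_div_pos.2 hθ).le)
          have := hc.tendsto
          rw [Real.zero_rpow (one_div_pos.2 hθ).ne'] at this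
          exact this.mono_left nhdsWithin_le_nhds
        · filter_upwards [self_mem_nhdsWithin] with x hx
          exact Real.rpow_pos_of_pos hx _
      have := base.inv_tendsto_nhdsGT_zero
      apply this.congr'
      filter_upwards [self_mem_nhdsWithin] with x hx
      simp only [Pi.inv_apply]
      rw [← Real.rpow_neg (le_of_lt hx)]
    exact (t2.comp t1).const_mul_atTop h0
  refine ⟨T, le_refl T, ?_⟩
  apply tendsto_atTop_mono' _ _ hg
  filter_upwards [Ioo_mem_nhdsLT_of_mem (⟨hT, le_refl T⟩ : T ∈ Set.Ioc 0 T)] with t ht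
  exact hlow t ht
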